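/- arXiv:0811.2251 — 5 statements merged into one kernel-verified Lean document; each statement's English description precedes it below -/
import Mathlib

section
/- (Continuity Lemma) Let U ⊆ ℝ^n be an open set of finite Lebesgue measure and let d ≥ 1. Let V(d) denote the (finite-dimensional) real vector space of polynomials in n variables of total degree at most d, with its standard topology. Then the function P ↦ Vol{x ∈ U : P(x) > 0} is continuous on V(d) \ {0}. -/
open MeasureTheory
open scoped ENNReal

open MvPolynomial in
lemma mv_zero_null : ∀ (n : ℕ) (P : MvPolynomial (Fin n) ℝ), P ≠ 0 →
    volume {x : Fin n → ℝ | eval x P = 0} = 0 := by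
  intro n
  induction n with
  | zero =>
      intro P hP
      obtain ⟨c, rfl⟩ := C_surjective (Fin 0) P
      have hc : c ≠ 0 := fun h => hP (by simp [h])
      have h : {x : Fin 0 → ℝ | eval x (C c) = 0} = ∅ := by
        ext x; simp [hc]
      rw [h]; exact measure_empty
  | succ n ih =>
      intro P hP
      set f := finSuccEquiv ℝ n P with hfdef
      have hf0 : f ≠ 0 := by
        intro h
        apply hP
        have h2 : finSuccEquiv ℝ n P = finSuccEquiv ℝ n 0 := by simpa [hfdef] using h
        simpa using (finSuccEquiv ℝ n).injective h2
      have hg0 : f.leadingCoeff ≠ 0 := Polynomial.leadingCoeff_ne_zero.2 hf0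
      set T : Set ((Fin n → ℝ) × ℝ) :=
        {p | eval (Fin.cons p.2 p.1 : Fin (n + 1) → ℝ) P = 0} with hT
      have hconsc : Continuous fun p : (Fin n → ℝ) × ℝ =>
          (Fin.cons p.2 p.1 : Fin (n + 1) → ℝ) := by
        refine continuous_pi fun i => ?_
        refine Fin.cases ?_ ?_ i
        · simpa using continuous_snd
        · intro j
          have hj : Continuous fun p : (Fin n → ℝ) × ℝ => p.1 j := (continuous_apply j).comp continuous_fst
          simpa using hj
      have hφ : Continuous fun p : (Fin n → ℝ) × ℝ =>
          eval (Fin.cons p.2 p.1 : Fin (n + 1) → ℝ) P :=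
        (MvPolynomial.continuous_eval P).comp hconsc
      have hTm : MeasurableSet T := hφ.measurable (measurableSet_singleton 0)
      have hTnull : (volume.prod volume) T = 0 := by
        rw [Measure.measure_prod_null hTm]
        have hbad := ih f.leadingCoeff hg0
        filter_upwards [measure_eq_zero_iff_ae_notMem.mp hbad] with s hs
        have hmap : f.map (eval s) ≠ 0 := by
          intro h
          have : (f.map (eval s)).coeff f.natDegree = 0 := by rw [h]; simp
          rw [Polynomial.coeff_map] at this
          exact hs this
        have hfin : {y : ℝ | Polynomial.IsRoot (f.map (eval s)) y}.Finite :=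
          Polynomial.finite_setOf_isRoot hmap
        have heq : Prod.mk s ⁻¹' T = {y : ℝ | Polynomial.IsRoot (f.map (eval s)) y} := by
          ext y
          simp only [Set.mem_preimage, hT, Set.mem_setOf_eq, Polynomial.IsRoot]
          rw [eval_eq_eval_mv_eval']
        simp only [Pi.zero_apply]
        rw [heq]
        exact hfin.measure_zero _
      have hmp : MeasurePreserving
          (Prod.swap ∘ (MeasurableEquiv.piFinSuccAbove (fun _ : Fin (n + 1) => ℝ) 0))
          volume (volume.prod volume) := by
        have h1 := volume_preserving_piFinSuccAbove (fun _ : Fin (n + 1) => ℝ) 0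
        have h2 : MeasurePreserving (Prod.swap : ℝ × (Fin n → ℝ) → (Fin n → ℝ) × ℝ)
            volume (volume.prod volume) := by
          rw [Measure.volume_eq_prod]
          exact Measure.measurePreserving_swap
        exact h2.comp h1
      have hZ : {x : Fin (n + 1) → ℝ | eval x P = 0} =
          (Prod.swap ∘ (MeasurableEquiv.piFinSuccAbove (fun _ : Fin (n + 1) => ℝ) 0)) ⁻¹' T := by
        ext x
        have hx : (Fin.cons (x 0) (fun j => x ((0 : Fin (n + 1)).succAbove j))
            : Fin (n + 1) → ℝ) = x := by
          have h3 : (fun j : Fin n => x ((0 : Fin (n + 1)).succAbove j)) = Fin.tail x := by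
            funext j; simp [Fin.zero_succAbove, Fin.tail]
          rw [h3, Fin.cons_self_tail]
        show eval x P = 0 ↔
          eval (Fin.cons (x 0) (fun j => x ((0 : Fin (n + 1)).succAbove j))
            : Fin (n + 1) → ℝ) P = 0
        rw [hx]
      rw [hZ, hmp.measure_preimage hTm.nullMeasurableSet]
      exact hTnull

lemma euclid_zero_null (n : ℕ) (P : MvPolynomial (Fin n) ℝ) (hP : P ≠ 0) :
    volume {x : EuclideanSpace ℝ (Fin n) | MvPolynomial.eval (fun j => x j) P = 0} = 0 := by
  have h := mv_zero_null n P hP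
  have hmp := EuclideanSpace.volume_preserving_symm_measurableEquiv_toLp (Fin n)
  have hmeas : MeasurableSet {x : Fin n → ℝ | MvPolynomial.eval x P = 0} :=
    (MvPolynomial.continuous_eval P).measurable (measurableSet_singleton 0)
  have heq : {x : EuclideanSpace ℝ (Fin n) | MvPolynomial.eval (fun j => x j) P = 0}
      = (MeasurableEquiv.toLp 2 (Fin n → ℝ)).symm ⁻¹'
        {x : Fin n → ℝ | MvPolynomial.eval x P = 0} := rfl
  rw [heq, hmp.measure_preimage hmeas.nullMeasurableSet]
  exact h

lemma coord_le_norm {n : ℕ} (x : EuclideanSpace ℝ (Fin n)) (j : Fin n) : |x j| ≤ ‖x‖ := by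
  have h := EuclideanSpace.norm_eq x
  rw [h]
  rw [show |x j| = Real.sqrt (‖x j‖ ^ 2) by rw [Real.sqrt_sq_eq_abs, Real.norm_eq_abs, abs_abs]]
  apply Real.sqrt_le_sqrt
  exact Finset.single_le_sum (f := fun i => ‖x i‖ ^ 2) (fun i _ => sq_nonneg _)
    (Finset.mem_univ j)

open MvPolynomial in
lemma eval_bound {n d : ℕ} (c : Fin n →₀ ℕ) (hc : ∀ j, c j = d)
    (R : MvPolynomial (Fin n) ℝ) (hR : R.totalDegree ≤ d) (δ : ℝ) (hδ : 0 ≤ δ)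
    (hcoef : ∀ m, |R.coeff m| ≤ δ) (x : EuclideanSpace ℝ (Fin n)) :
    |eval (fun j => x j) R| ≤ δ * (((Finset.Iic c).card : ℝ) * (1 + ‖x‖) ^ d) := by
  have hb : (1 : ℝ) ≤ 1 + ‖x‖ := by linarith [norm_nonneg x]
  have hb0 : (0 : ℝ) ≤ 1 + ‖x‖ := by linarith
  have hxj : ∀ j, |x j| ≤ 1 + ‖x‖ := fun j => (coord_le_norm x j).trans (by linarith)
  have hdeg : ∀ m ∈ R.support, ∑ j, m j ≤ d := by
    intro m hm
    have h1 : (m.sum fun _ e => e) ≤ R.totalDegree := le_totalDegree hm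
    have h2 : (m.sum fun _ e => e) = ∑ j, m j := Finsupp.sum_fintype _ _ (fun _ => rfl)
    omega
  have hsub : R.support ⊆ Finset.Iic c := by
    intro m hm
    rw [Finset.mem_Iic]
    intro j
    have := hdeg m hm
    have hj : m j ≤ ∑ i, m i :=
      Finset.single_le_sum (f := fun i => m i) (fun _ _ => Nat.zero_le _) (Finset.mem_univ j)
    rw [hc j]
    omega
  have hterm : ∀ m ∈ R.support, |R.coeff m * ∏ j, (x j) ^ m j| ≤ δ * (1 + ‖x‖) ^ d := by
    intro m hm
    rw [abs_mul]
    have hprod : |∏ j, (x j) ^ m j| ≤ (1 + ‖x‖) ^ d := by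
      rw [Finset.abs_prod]
      calc ∏ j, |(x j) ^ m j| = ∏ j, |x j| ^ m j := by simp [abs_pow]
        _ ≤ ∏ j, (1 + ‖x‖) ^ m j :=
            Finset.prod_le_prod (fun j _ => by positivity)
              (fun j _ => pow_le_pow_left₀ (abs_nonneg _) (hxj j) _)
        _ = (1 + ‖x‖) ^ (∑ j, m j) := Finset.prod_pow_eq_pow_sum _ _ _
        _ ≤ (1 + ‖x‖) ^ d := pow_le_pow_right₀ hb (hdeg m hm)
    exact mul_le_mul (hcoef m) hprod (abs_nonneg _) hδ
  rw [eval_eq']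
  calc |∑ m ∈ R.support, R.coeff m * ∏ j, (x j) ^ m j|
      ≤ ∑ m ∈ R.support, |R.coeff m * ∏ j, (x j) ^ m j| := Finset.abs_sum_le_sum_abs _ _
    _ ≤ ∑ _m ∈ R.support, δ * (1 + ‖x‖) ^ d := Finset.sum_le_sum hterm
    _ ≤ ∑ _m ∈ Finset.Iic c, δ * (1 + ‖x‖) ^ d :=
        Finset.sum_le_sum_of_subset_of_nonneg hsub (fun _ _ _ => by positivity)
    _ = δ * (((Finset.Iic c).card : ℝ) * (1 + ‖x‖) ^ d) := by
        rw [Finset.sum_const, nsmul_eq_mul]; ring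

/-- **Continuity Lemma.** Let `U ⊆ ℝ^n` be open of finite measure.  On the finite-dimensional
space `V(d)` of polynomials of total degree at most `d`, the function
`P ↦ Vol {x ∈ U | P(x) > 0}` is continuous away from `0`.  Continuity (with respect to the
standard topology of `V(d)`, here realized by the sup-norm on coefficients) is expressed in
`ε`-`δ` form at an arbitrary nonzero `P ∈ V(d)`. -/
theorem continuity_lemma (n d : ℕ) (hd : 1 ≤ d)
    (U : Set (EuclideanSpace ℝ (Fin n))) (hUopen : IsOpen U) (hUvol : volume U < ⊤)
    (P : MvPolynomial (Fin n) ℝ) (hP : P ≠ 0) (hPd : P.totalDegree ≤ d)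
    (ε : ℝ) (hε : 0 < ε) :
    ∃ δ : ℝ, 0 < δ ∧
      ∀ Q : MvPolynomial (Fin n) ℝ, Q.totalDegree ≤ d →
        (∀ m : Fin n →₀ ℕ, |Q.coeff m - P.coeff m| < δ) →
        |(volume {x ∈ U | 0 < MvPolynomial.eval (fun j => x j) Q}).toReal
          - (volume {x ∈ U | 0 < MvPolynomial.eval (fun j => x j) P}).toReal| < ε := by
  classical
  set F : EuclideanSpace ℝ (Fin n) → ℝ := fun x => MvPolynomial.eval (fun j => x j) P with hFdef
  have hcoords : Continuous fun x : EuclideanSpace ℝ (Fin n) => (fun j => x j : Fin n → ℝ) :=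
    continuous_pi fun j => (continuous_apply j).comp (PiLp.continuous_ofLp (p := 2) (β := fun _ : Fin n => ℝ))
  have hFc : Continuous F := (MvPolynomial.continuous_eval P).comp hcoords
  -- the constant
  set c : Fin n →₀ ℕ := Finsupp.equivFunOnFinite.symm (fun _ => d) with hcdef
  have hc : ∀ j, c j = d := fun j => rfl
  set N : ℝ := ((Finset.Iic c).card : ℝ) with hNdef
  have hN1 : (1 : ℝ) ≤ N := by
    have h0 : 0 ∈ Finset.Iic c := Finset.mem_Iic.2 bot_le
    have hcard : 1 ≤ (Finset.Iic c).card := Finset.card_pos.2 ⟨0, h0⟩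
    rw [hNdef]
    exact_mod_cast hcard
  set w : EuclideanSpace ℝ (Fin n) → ℝ := fun x => N * (1 + ‖x‖) ^ d with hwdef
  have hwc : Continuous w :=
    continuous_const.mul ((continuous_const.add continuous_norm).pow d)
  have hwpos : ∀ x, 0 < w x := fun x => by
    show 0 < N * (1 + ‖x‖) ^ d
    have h1 : (0:ℝ) < (1 + ‖x‖) ^ d := by positivity
    nlinarith
  have hwnonneg : ∀ x, 0 ≤ w x := fun x => (hwpos x).le
  -- the shrinking bad sets
  set S : ℝ → Set (EuclideanSpace ℝ (Fin n)) := fun δ => {x ∈ U | |F x| ≤ δ * w x} with hSdef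
  have hSm : ∀ δ, MeasurableSet (S δ) := by
    intro δ
    show MeasurableSet {x ∈ U | |F x| ≤ δ * w x}
    exact hUopen.measurableSet.inter
      (measurableSet_le hFc.abs.measurable (continuous_const.mul hwc).measurable)
  have hanti : Antitone fun k : ℕ => S (1 / (k + 1)) := by
    intro k l hkl
    intro x hx
    refine ⟨hx.1, hx.2.trans ?_⟩
    have h1 : (1 : ℝ) / (l + 1) ≤ 1 / (k + 1) := by
      apply div_le_div_of_nonneg_left one_pos.le (by positivity)
      exact_mod_cast Nat.succ_le_succ hkl
    exact mul_le_mul_of_nonneg_right h1 (hwnonneg x)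
  have hiInter : (⋂ k : ℕ, S (1 / (k + 1))) ⊆ {x : EuclideanSpace ℝ (Fin n) | F x = 0} := by
    intro x hx
    simp only [Set.mem_iInter] at hx
    by_contra h0
    have hF0 : 0 < |F x| := abs_pos.2 h0
    obtain ⟨k, hk⟩ := exists_nat_gt (w x / |F x|)
    have hk1 : w x < (k + 1) * |F x| := by
      have := (div_lt_iff₀ hF0).1 hk
      nlinarith
    have hb := (hx k).2
    have hkpos : (0:ℝ) < (k:ℝ) + 1 := by positivity
    rw [div_mul_eq_mul_div, le_div_iff₀ hkpos] at hb
    nlinarith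
  have hInull : volume (⋂ k : ℕ, S (1 / (k + 1))) = 0 :=
    measure_mono_null hiInter (euclid_zero_null n P hP)
  have htend : Filter.Tendsto (fun k : ℕ => volume (S (1 / (k + 1)))) Filter.atTop (nhds 0) := by
    have := tendsto_measure_iInter_atTop (μ := volume) (s := fun k : ℕ => S (1 / (k + 1)))
      (fun k => (hSm _).nullMeasurableSet) hanti
      ⟨0, ((measure_mono (show S (1 / ((0:ℕ) + 1)) ⊆ U from fun x hx => hx.1)).trans_lt
        hUvol).ne⟩
    rwa [hInull] at this
  have hev : ∀ᶠ k : ℕ in Filter.atTop, volume (S (1 / (k + 1))) < ENNReal.ofReal ε :=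
    htend.eventually_lt_const (ENNReal.ofReal_pos.2 hε)
  obtain ⟨k₀, hk₀⟩ := hev.exists
  set δ₀ : ℝ := 1 / (k₀ + 1) with hδ₀def
  have hδ₀pos : 0 < δ₀ := by rw [hδ₀def]; positivity
  have hNpos : (0:ℝ) < N := lt_of_lt_of_le one_pos hN1
  refine ⟨δ₀ / N, div_pos hδ₀pos hNpos, ?_⟩
  intro Q hQd hQP
  set G : EuclideanSpace ℝ (Fin n) → ℝ := fun x => MvPolynomial.eval (fun j => x j) Q with hGdef
  -- evaluation bound for Q - P
  have hkey : ∀ x : EuclideanSpace ℝ (Fin n), |G x - F x| ≤ δ₀ * w x := by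
    intro x
    have hRd : (Q - P).totalDegree ≤ d :=
      le_trans (MvPolynomial.totalDegree_sub Q P) (max_le hQd hPd)
    have hcoef : ∀ m, |(Q - P).coeff m| ≤ δ₀ / N := by
      intro m
      rw [MvPolynomial.coeff_sub]
      exact (hQP m).le
    have := eval_bound c hc (Q - P) hRd (δ₀ / N) (div_pos hδ₀pos hNpos).le hcoef x
    have heval : MvPolynomial.eval (fun j => x j) (Q - P) = G x - F x := by
      rw [map_sub]
    rw [heval] at this
    have hNne : N ≠ 0 := hNpos.ne'
    have hp : (0:ℝ) ≤ (1 + ‖x‖) ^ d := by positivity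
    calc |G x - F x| ≤ δ₀ / N * (N * (1 + ‖x‖) ^ d) := this
      _ = δ₀ * (1 + ‖x‖) ^ d := by field_simp
      _ ≤ δ₀ * (N * (1 + ‖x‖) ^ d) := by
          nlinarith [mul_nonneg (mul_nonneg hδ₀pos.le hp) (sub_nonneg.2 hN1)]
      _ = δ₀ * w x := rfl
  set A := {x ∈ U | 0 < G x} with hAdef
  set B := {x ∈ U | 0 < F x} with hBdef
  have hAB : A ⊆ B ∪ S δ₀ := by
    intro x hx
    by_cases hxS : x ∈ S δ₀
    · exact Or.inr hxS
    · left
      refine ⟨hx.1, ?_⟩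
      have h1 : ¬ |F x| ≤ δ₀ * w x := fun h => hxS ⟨hx.1, h⟩
      push_neg at h1
      by_contra h2
      push_neg at h2
      have habs : |F x| = -F x := abs_of_nonpos h2
      have h3 := hkey x
      have h4 : G x - F x ≤ |G x - F x| := le_abs_self _
      have h5 := hx.2
      linarith
  have hBA : B ⊆ A ∪ S δ₀ := by
    intro x hx
    by_cases hxS : x ∈ S δ₀
    · exact Or.inr hxS
    · left
      refine ⟨hx.1, ?_⟩
      have h1 : ¬ |F x| ≤ δ₀ * w x := fun h => hxS ⟨hx.1, h⟩
      push_neg at h1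
      by_contra h2
      push_neg at h2
      have habs : |F x| = F x := abs_of_nonneg hx.2.le
      have h3 := hkey x
      have h4 : F x - G x ≤ |G x - F x| := by
        rw [abs_sub_comm] at h3 ⊢
        exact le_abs_self _
      linarith
  -- measures
  have hAfin : volume A ≠ ⊤ := ((measure_mono (Set.sep_subset _ _)).trans_lt hUvol).ne
  have hBfin : volume B ≠ ⊤ := ((measure_mono (Set.sep_subset _ _)).trans_lt hUvol).ne
  have hSfin : volume (S δ₀) ≠ ⊤ := ((measure_mono (Set.sep_subset _ _)).trans_lt hUvol).ne
  have hSlt : (volume (S δ₀)).toReal < ε := ENNReal.toReal_lt_of_lt_ofReal hk₀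
  have hmA : volume A ≤ volume B + volume (S δ₀) :=
    (measure_mono hAB).trans (measure_union_le _ _)
  have hmB : volume B ≤ volume A + volume (S δ₀) :=
    (measure_mono hBA).trans (measure_union_le _ _)
  have ha : (volume A).toReal ≤ (volume B).toReal + (volume (S δ₀)).toReal := by
    rw [← ENNReal.toReal_add hBfin hSfin]
    exact ENNReal.toReal_mono (by simp [ENNReal.add_ne_top, hBfin, hSfin]) hmA
  have hb : (volume B).toReal ≤ (volume A).toReal + (volume (S δ₀)).toReal := by
    rw [← ENNReal.toReal_add hAfin hSfin]
    exact ENNReal.toReal_mono (by simp [ENNReal.add_ne_top, hAfin, hSfin]) hmB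
  rw [abs_sub_lt_iff]
  constructor <;> linarith
end

section
/- Let P be a nonzero real polynomial in n variables of total degree at most d, with zero set Z = {x ∈ ℝ^n : P(x) = 0}, and let v ∈ ℝ^n be a unit vector. Then for H^{n-1}-almost every y ∈ v^⊥, the line π_v^{-1}{y} = {y + t v : t ∈ ℝ} meets Z in at most d points. -/
open MeasureTheory MvPolynomial
open scoped ENNReal

section Auxiliary


private lemma zeroset_measurable {m : ℕ} (c : MvPolynomial (Fin m) ℝ) :
    MeasurableSet {x : Fin m → ℝ | eval x c = 0} :=
  (isClosed_eq (c.continuous_eval) continuous_const).measurableSet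

private lemma volume_zeroset : ∀ (m : ℕ) (c : MvPolynomial (Fin m) ℝ), c ≠ 0 →
    volume {x : Fin m → ℝ | eval x c = 0} = 0 := by
  intro m
  induction m with
  | zero =>
    intro c hc
    obtain ⟨a, rfl⟩ := MvPolynomial.C_surjective (Fin 0) c
    have ha : a ≠ 0 := fun h => hc (by simp [h])
    convert measure_empty
    · ext x; simp [ha]
    · infer_instance
  | succ m ih =>
    intro c hc
    set Q := finSuccEquiv ℝ m c with hQdef
    have hQ0 : Q ≠ 0 := fun h =>
      hc ((finSuccEquiv ℝ m).injective (by rw [← hQdef, h, map_zero]))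
    obtain ⟨k, hk⟩ : ∃ k, Q.coeff k ≠ 0 := by
      by_contra h
      push_neg at h
      exact hQ0 (Polynomial.ext fun k => by simp [h k])
    have hmp := measurePreserving_piFinSuccAbove (fun _ : Fin (m+1) => (volume : Measure ℝ)) 0
    set T : Set (ℝ × (Fin m → ℝ)) := {p | eval (Fin.cons p.1 p.2) c = 0} with hTdef
    have hTcont : Continuous fun p : ℝ × (Fin m → ℝ) => eval (Fin.cons p.1 p.2) c := by
      apply c.continuous_eval.comp
      exact continuous_pi fun i => i.cases continuous_fst
        (fun j => (continuous_apply j).comp continuous_snd)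
    have hTm : MeasurableSet T := (isClosed_eq hTcont continuous_const).measurableSet
    have hpre : (MeasurableEquiv.piFinSuccAbove (fun _ : Fin (m+1) => ℝ) 0) ⁻¹' T
        = {x : Fin (m+1) → ℝ | eval x c = 0} := by
      ext x
      simp [T, MeasurableEquiv.piFinSuccAbove, Fin.insertNthEquiv, Fin.cons_self_tail,
        Fin.succAbove]
    have h1 : volume {x : Fin (m+1) → ℝ | eval x c = 0}
        = ((volume : Measure ℝ).prod (volume : Measure (Fin m → ℝ))) T := by
      rw [← hpre, volume_pi, hmp.measure_preimage hTm.nullMeasurableSet, ← volume_pi]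
    set T' : Set ((Fin m → ℝ) × ℝ) := {p | eval (Fin.cons p.2 p.1) c = 0} with hT'def
    have hT'cont : Continuous fun p : (Fin m → ℝ) × ℝ => eval (Fin.cons p.2 p.1) c := by
      apply c.continuous_eval.comp
      exact continuous_pi fun i => i.cases continuous_snd
        (fun j => (continuous_apply j).comp continuous_fst)
    have hT'm : MeasurableSet T' := (isClosed_eq hT'cont continuous_const).measurableSet
    have hswap : Prod.swap ⁻¹' T' = T := rfl
    have h2 : ((volume : Measure ℝ).prod (volume : Measure (Fin m → ℝ))) T
        = ((volume : Measure (Fin m → ℝ)).prod (volume : Measure ℝ)) T' := by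
      rw [← hswap, ← (Measure.measurePreserving_swap).measure_preimage hT'm.nullMeasurableSet]
    rw [h1, h2, Measure.measure_prod_null hT'm]
    have hnull := ih (Q.coeff k) hk
    filter_upwards [compl_mem_ae_iff.2 hnull] with y hy
    have hy' : eval y (Q.coeff k) ≠ 0 := hy
    have hqy : Q.map (eval y) ≠ 0 := fun h => hy' (by
      have := congrArg (fun q => Polynomial.coeff q k) h
      simpa [Polynomial.coeff_map] using this)
    have : (Prod.mk y ⁻¹' T') = {t : ℝ | (Q.map (eval y)).IsRoot t} := by
      ext t
      simp only [Set.mem_preimage, Set.mem_setOf_eq, T', Polynomial.IsRoot]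
      rw [← eval_eq_eval_mv_eval']
    simp only [Pi.zero_apply]
    rw [this]
    exact ((Polynomial.finite_setOf_isRoot hqy).measure_zero _)


private noncomputable def lineSub {n : ℕ} (v : Fin n → ℝ) :
    MvPolynomial (Fin n) ℝ →ₐ[ℝ] Polynomial (MvPolynomial (Fin n) ℝ) :=
  aeval (fun i => Polynomial.C (X i) + Polynomial.X * Polynomial.C (C (v i)))

private lemma lineSub_eval {n : ℕ} (v : Fin n → ℝ) (p : MvPolynomial (Fin n) ℝ)
    (y : Fin n → ℝ) (t : ℝ) :
    Polynomial.eval t (Polynomial.map (eval y) (lineSub v p))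
      = eval (fun j => y j + t * v j) p := by
  induction p using MvPolynomial.induction_on with
  | C a => simp [lineSub]
  | add p q hp hq =>
      rw [map_add, Polynomial.map_add, Polynomial.eval_add, hp, hq, map_add]
  | mul_X p i hp =>
      rw [map_mul, Polynomial.map_mul, Polynomial.eval_mul, hp, map_mul]
      congr 1
      rw [show lineSub v (X i) = Polynomial.C (X i) + Polynomial.X * Polynomial.C (C (v i))
        from aeval_X _ i]
      simp
      ring

private lemma lineSub_natDegree {n : ℕ} (v : Fin n → ℝ) (p : MvPolynomial (Fin n) ℝ) :
    (lineSub v p).natDegree ≤ p.totalDegree := by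
  conv_lhs => rw [← p.support_sum_monomial_coeff]
  rw [map_sum]
  apply Polynomial.natDegree_sum_le_of_forall_le
  intro s hs
  rw [lineSub, aeval_monomial]
  refine le_trans (Polynomial.natDegree_mul_le) ?_
  have h1 : (algebraMap ℝ (Polynomial (MvPolynomial (Fin n) ℝ)) (coeff s p)).natDegree = 0 :=
    Polynomial.natDegree_C _
  rw [h1, zero_add, Finsupp.prod]
  refine le_trans (Polynomial.natDegree_prod_le _ _) ?_
  refine le_trans (Finset.sum_le_sum (fun i _ => ?_)) (le_totalDegree hs)
  refine le_trans (Polynomial.natDegree_pow_le) ?_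
  have h2 : (Polynomial.C (X (R := ℝ) i) + Polynomial.X * Polynomial.C (C (v i))).natDegree ≤ 1 := by
    refine le_trans (Polynomial.natDegree_add_le _ _) (max_le (by simp) ?_)
    exact le_trans (Polynomial.natDegree_mul_le) (by simp)
  calc s i * (Polynomial.C (X (R := ℝ) i) + Polynomial.X * Polynomial.C (C (v i))).natDegree
      ≤ s i * 1 := Nat.mul_le_mul_left _ h2
    _ = s i := mul_one _

private lemma hausdorff_zeroset (m : ℕ) (c : MvPolynomial (Fin m) ℝ) (hc : c ≠ 0) :
    μH[(m:ℝ)] {x : EuclideanSpace ℝ (Fin m) | eval (fun j => x j) c = 0} = 0 := by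
  have hvol : (volume : Measure (EuclideanSpace ℝ (Fin m)))
      {x : EuclideanSpace ℝ (Fin m) | eval (fun j => x j) c = 0} = 0 := by
    have hmp := EuclideanSpace.volume_preserving_symm_measurableEquiv_toLp (Fin m)
    have hpre : (MeasurableEquiv.toLp 2 (Fin m → ℝ)).symm ⁻¹' {x : Fin m → ℝ | eval x c = 0}
        = {x : EuclideanSpace ℝ (Fin m) | eval (fun j => x j) c = 0} := rfl
    rw [← hpre, hmp.measure_preimage (zeroset_measurable c).nullMeasurableSet]
    exact volume_zeroset m c hc
  have hH : (μH[(m:ℝ)] : Measure (EuclideanSpace ℝ (Fin m))).IsAddHaarMeasure := by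
    have : ((m:ℕ):ℝ) = ((Module.finrank ℝ (EuclideanSpace ℝ (Fin m)) : ℕ) : ℝ) := by
      simp
    rw [this]
    infer_instance
  have := Measure.isAddLeftInvariant_eq_smul
    (μH[(m:ℝ)] : Measure (EuclideanSpace ℝ (Fin m))) volume
  rw [this, Measure.smul_apply, hvol, smul_zero]

private lemma eval_bind₁' {σ τ : Type*} (h : σ → MvPolynomial τ ℝ) (φ : MvPolynomial σ ℝ)
    (z : τ → ℝ) : eval z (bind₁ h φ) = eval (fun i => eval z (h i)) φ := by
  rw [show (eval z : MvPolynomial τ ℝ →+* ℝ) ((bind₁ h) φ) = _ from hom_bind₁ _ _ _]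
  show _ = (eval₂Hom (RingHom.id ℝ) fun i => eval z (h i)) φ
  exact eval₂Hom_congr (RingHom.ext fun r => by simp) rfl rfl


end Auxiliary

/-- If `P` is a nonzero polynomial on `ℝ^n` of degree at most `d`, with zero set `Z`, and `v` is
a unit vector, then for `H^{n-1}`-almost every `y` in the hyperplane `v^⊥`, the line
`{y + t v : t ∈ ℝ}` meets `Z` in at most `d` points. -/
theorem line_meets_zero_set_in_le_d_points (n d : ℕ) (hn : 1 ≤ n)
    (P : MvPolynomial (Fin n) ℝ) (hP : P ≠ 0) (hPd : P.totalDegree ≤ d)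
    (v : EuclideanSpace ℝ (Fin n)) (hv : ‖v‖ = 1) :
    ∀ᵐ y ∂(μH[(n:ℝ) - 1]).restrict {y : EuclideanSpace ℝ (Fin n) | inner ℝ v y = (0:ℝ)},
      ({x : EuclideanSpace ℝ (Fin n) | MvPolynomial.eval (fun j => x j) P = 0}
          ∩ {x | ∃ t : ℝ, x = y + t • v}).encard ≤ (d : ℕ∞) := by
  classical
  obtain ⟨m, rfl⟩ : ∃ m, n = m + 1 := ⟨n - 1, by omega⟩
  have hv0 : v ≠ 0 := fun h => by simp [h] at hv
  set K := (Submodule.span ℝ {v})ᗮ with hKdef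
  haveI : Fact (Module.finrank ℝ (EuclideanSpace ℝ (Fin (m+1))) = m + 1) := ⟨by simp⟩
  have hKrank : Module.finrank ℝ K = m := Submodule.finrank_orthogonal_span_singleton hv0
  set ob : OrthonormalBasis (Fin m) ℝ K :=
    (stdOrthonormalBasis ℝ K).reindex (finCongr hKrank) with hob
  set f : EuclideanSpace ℝ (Fin m) ≃ₗᵢ[ℝ] K := ob.repr.symm with hf
  set g : EuclideanSpace ℝ (Fin m) →ₗᵢ[ℝ] EuclideanSpace ℝ (Fin (m+1)) :=
    K.subtypeₗᵢ.comp f.toLinearIsometry with hg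
  set V : Set (EuclideanSpace ℝ (Fin (m+1))) := {y | inner ℝ v y = (0:ℝ)} with hV
  have hrange : Set.range g = V := by
    ext y
    constructor
    · rintro ⟨z, rfl⟩
      have hmem : (g z : EuclideanSpace ℝ (Fin (m+1))) ∈ K := (f z).2
      simpa [hV] using Submodule.mem_orthogonal_singleton_iff_inner_right.1 hmem
    · intro hy
      have hyK : y ∈ K := Submodule.mem_orthogonal_singleton_iff_inner_right.2 hy
      exact ⟨f.symm ⟨y, hyK⟩, by simp [hg]⟩
  set R : Polynomial (MvPolynomial (Fin (m+1)) ℝ) := lineSub (fun j => v j) P with hR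
  set M : Fin (m+1) → Fin m → ℝ := fun i j => g ((EuclideanSpace.basisFun (Fin m) ℝ) j) i
    with hM
  have coord : ∀ (z : EuclideanSpace ℝ (Fin m)) (i : Fin (m+1)),
      g z i = ∑ j, M i j * z j := by
    intro z i
    have hz : ∑ j, z j • (EuclideanSpace.basisFun (Fin m) ℝ) j = z := by
      simpa [EuclideanSpace.basisFun_repr] using
        (EuclideanSpace.basisFun (Fin m) ℝ).sum_repr z
    conv_lhs => rw [← hz]
    rw [map_sum, WithLp.ofLp_sum, Finset.sum_apply i Finset.univ _]
    refine Finset.sum_congr rfl fun j _ => ?_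
    rw [LinearIsometry.map_smul]
    show z j * g ((EuclideanSpace.basisFun (Fin m) ℝ) j) i = M i j * z j
    rw [mul_comm, hM]
  set lin : Fin (m+1) → MvPolynomial (Fin m) ℝ := fun i => ∑ j, C (M i j) * X j with hlin
  have evcomp : ∀ (c : MvPolynomial (Fin (m+1)) ℝ) (z : EuclideanSpace ℝ (Fin m)),
      eval (fun j => z j) (bind₁ lin c) = eval (fun i => g z i) c := by
    intro c z
    have harg : (fun i => eval (fun j => z j) (lin i)) = (fun i : Fin (m+1) => g z i) := by
      funext i
      rw [coord]
      simp [hlin, map_sum]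
    rw [eval_bind₁', harg]
  have key : ∀ (y : EuclideanSpace ℝ (Fin (m+1))) (t : ℝ),
      eval (fun j => y j + t * v j) P
        = Polynomial.eval t (Polynomial.map (eval (fun j => y j)) R) :=
    fun y t => (lineSub_eval _ P _ t).symm
  have good : ∀ y : EuclideanSpace ℝ (Fin (m+1)),
      Polynomial.map (eval (fun j => y j)) R ≠ 0 →
      ({x : EuclideanSpace ℝ (Fin (m+1)) | eval (fun j => x j) P = 0}
          ∩ {x | ∃ t : ℝ, x = y + t • v}).encard ≤ (d : ℕ∞) := by
    intro y hq
    set q := Polynomial.map (eval (fun j => y j)) R with hqdef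
    have hsub : ({x : EuclideanSpace ℝ (Fin (m+1)) | eval (fun j => x j) P = 0}
          ∩ {x | ∃ t : ℝ, x = y + t • v})
        ⊆ (fun t : ℝ => y + t • v) '' ↑q.roots.toFinset := by
      rintro x ⟨hx1, t, rfl⟩
      refine ⟨t, ?_, rfl⟩
      have h0 : (fun j => (y + t • v) j) = (fun j : Fin (m+1) => y j + t * v j) := by
        funext j; simp
      rw [Finset.mem_coe, Multiset.mem_toFinset, Polynomial.mem_roots']
      refine ⟨hq, ?_⟩
      rw [Polynomial.IsRoot, ← key, ← h0]
      exact hx1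
    refine le_trans (Set.encard_mono hsub) ?_
    refine le_trans (Set.encard_image_le _ _) ?_
    rw [Set.encard_coe_eq_coe_finsetCard]
    have h1 : q.roots.toFinset.card ≤ d := by
      refine le_trans (Multiset.toFinset_card_le _) ?_
      refine le_trans (Polynomial.card_roots' q) ?_
      refine le_trans (Polynomial.natDegree_map_le) ?_
      exact le_trans (lineSub_natDegree _ P) hPd
    exact_mod_cast h1
  have hex : ∃ k, bind₁ lin (R.coeff k) ≠ 0 := by
    by_contra h
    push_neg at h
    apply hP
    apply MvPolynomial.funext (q := 0)
    intro x
    rw [map_zero]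
    set xE : EuclideanSpace ℝ (Fin (m+1)) := (WithLp.equiv 2 (Fin (m+1) → ℝ)).symm x with hxE
    have hx : (fun j => xE j) = x := rfl
    set t : ℝ := inner ℝ v xE with ht
    set y : EuclideanSpace ℝ (Fin (m+1)) := xE - t • v with hy
    have hvv : (inner ℝ v v : ℝ) = 1 := by
      rw [real_inner_self_eq_norm_mul_norm, hv]; norm_num
    have hyV : y ∈ V := by
      simp only [hV, Set.mem_setOf_eq, hy, inner_sub_right, real_inner_smul_right, hvv,
        mul_one]
      rw [ht, sub_self]
    obtain ⟨z, hz⟩ : y ∈ Set.range g := by rw [hrange]; exact hyV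
    have hq0 : Polynomial.map (eval (fun j => y j)) R = 0 := by
      apply Polynomial.ext
      intro k
      rw [Polynomial.coeff_map, Polynomial.coeff_zero]
      have hev := evcomp (R.coeff k) z
      rw [h k, map_zero] at hev
      have hgz : (fun i => g z i) = fun j => y j := by funext i; rw [hz]
      rw [← hgz, ← hev]
    have hzero : eval (fun j => y j + t * v j) P = 0 := by
      rw [key, hq0, Polynomial.eval_zero]
    rw [← hx]
    rw [show (fun j => xE j) = (fun j : Fin (m+1) => y j + t * v j) by
      funext j
      simp [hy, PiLp.sub_apply, PiLp.smul_apply, smul_eq_mul]]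
    exact hzero
  obtain ⟨k₀, hk₀⟩ := hex
  have hnullE := hausdorff_zeroset m _ hk₀
  set N : Set (EuclideanSpace ℝ (Fin (m+1))) :=
    V ∩ {y | eval (fun j => y j) (R.coeff k₀) = 0} with hN
  have hNnull : μH[((m+1:ℕ):ℝ) - 1] N = 0 := by
    have hcast : ((m+1:ℕ):ℝ) - 1 = (m:ℝ) := by push_cast; ring
    rw [hcast]
    have hNsub : N ⊆ Set.range g := fun y hy => by rw [hrange]; exact hy.1
    rw [← Set.image_preimage_eq_of_subset hNsub]
    rw [g.isometry.hausdorffMeasure_image (Or.inl (by positivity))]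
    refine measure_mono_null ?_ hnullE
    intro z hz
    show eval (fun j => z j) (bind₁ lin (R.coeff k₀)) = 0
    rw [evcomp]
    exact hz.2
  have hVm : MeasurableSet V :=
    (isClosed_eq (continuous_const.inner continuous_id) continuous_const).measurableSet
  rw [ae_iff, Measure.restrict_apply' hVm]
  refine measure_mono_null ?_ hNnull
  rintro y ⟨hbad, hyV⟩
  refine ⟨hyV, ?_⟩
  have hq0 : Polynomial.map (eval (fun j => y j)) R = 0 := by
    by_contra hne
    exact hbad (good y hne)
  have hco := congrArg (fun q => Polynomial.coeff q k₀) hq0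
  simpa [Polynomial.coeff_map] using hco
end

section
/- Let n ≥ 1 and let v_1, …, v_n ∈ ℝ^n be unit vectors with ‖v_j − e_j‖ ≤ (100 n)^{-1} for each j, where e_1, …, e_n is the standard orthonormal basis. Let (S, μ) be a measure space and let N : S → ℝ^n be a measurable map with ‖N(x)‖ = 1 for all x ∈ S. Then μ(S) ≤ 2 ∑_{j=1}^n ∫_S |⟨v_j, N(x)⟩| dμ(x). (Applied to a hypersurface S with unit normal field N and μ its surface measure, this says Vol(S) ≤ 2 ∑_j V_S(v_j).) -/
open MeasureTheory
open scoped ENNReal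

/-- If `v_1, …, v_n` are unit vectors with `‖v_j − e_j‖ ≤ (100 n)⁻¹`, and `N : S → ℝ^n` is a
measurable unit-vector field on a measure space `(S, μ)`, then
`μ(S) ≤ 2 ∑_j ∫_S |⟨v_j, N(x)⟩| dμ(x)`.  (For a hypersurface `S` with unit normal `N` and
surface measure `μ`, this says `Vol(S) ≤ 2 ∑_j V_S(v_j)`.) -/
theorem measure_le_two_sum_directed (n : ℕ) (hn : 1 ≤ n)
    (v : Fin n → EuclideanSpace ℝ (Fin n))
    (hv : ∀ j, ‖v j‖ = 1)
    (hve : ∀ j, ‖v j - EuclideanSpace.single j (1:ℝ)‖ ≤ (100 * (n:ℝ))⁻¹)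
    {S : Type*} [MeasurableSpace S] (μ : Measure S)
    (N : S → EuclideanSpace ℝ (Fin n)) (hNmeas : Measurable N)
    (hNunit : ∀ x, ‖N x‖ = 1) :
    μ Set.univ ≤ 2 * ∑ j : Fin n, ∫⁻ x, ENNReal.ofReal |(inner ℝ (v j) (N x) : ℝ)| ∂μ := by
  have hnpos : (0:ℝ) < n := by exact_mod_cast hn
  -- pointwise bound
  have key : ∀ x, (1:ℝ≥0∞) ≤ 2 * ∑ j : Fin n, ENNReal.ofReal |(inner ℝ (v j) (N x) : ℝ)| := by
    intro x
    have hdecomp : N x = ∑ j : Fin n, EuclideanSpace.single j (N x j) := by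
      ext i
      rw [WithLp.ofLp_sum, Finset.sum_apply]
      simp [EuclideanSpace.single_apply]
    have h1 : ‖N x‖ ≤ ∑ j : Fin n, |N x j| := by
      calc ‖N x‖ = ‖∑ j : Fin n, EuclideanSpace.single j (N x j)‖ := by rw [← hdecomp]
        _ ≤ ∑ j : Fin n, ‖EuclideanSpace.single j (N x j)‖ := norm_sum_le _ _
        _ = ∑ j : Fin n, |N x j| := by simp [EuclideanSpace.norm_single]
    have h2 : ∀ j : Fin n, |N x j| ≤ |(inner ℝ (v j) (N x) : ℝ)| + (100 * (n:ℝ))⁻¹ := by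
      intro j
      have he : (inner ℝ (EuclideanSpace.single j (1:ℝ)) (N x) : ℝ) = N x j := by
        simp [EuclideanSpace.inner_single_left]
      have hsub : (inner ℝ (v j - EuclideanSpace.single j (1:ℝ)) (N x) : ℝ)
          = (inner ℝ (v j) (N x) : ℝ) - N x j := by
        rw [inner_sub_left, he]
      have hb : |(inner ℝ (v j - EuclideanSpace.single j (1:ℝ)) (N x) : ℝ)| ≤ (100 * (n:ℝ))⁻¹ := by
        calc |(inner ℝ (v j - EuclideanSpace.single j (1:ℝ)) (N x) : ℝ)|
            ≤ ‖v j - EuclideanSpace.single j (1:ℝ)‖ * ‖N x‖ := abs_real_inner_le_norm _ _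
          _ ≤ (100 * (n:ℝ))⁻¹ := by rw [hNunit x, mul_one]; exact hve j
      have : |N x j| ≤ |(inner ℝ (v j) (N x) : ℝ)|
          + |(inner ℝ (v j - EuclideanSpace.single j (1:ℝ)) (N x) : ℝ)| := by
        rw [hsub]
        have := abs_sub_abs_le_abs_sub (N x j) (inner ℝ (v j) (N x) : ℝ)
        have h := abs_sub (N x j) (inner ℝ (v j) (N x) : ℝ)
        calc |N x j| = |(inner ℝ (v j) (N x) : ℝ) - ((inner ℝ (v j) (N x) : ℝ) - N x j)| := by ring_nf
          _ ≤ |(inner ℝ (v j) (N x) : ℝ)| + |(inner ℝ (v j) (N x) : ℝ) - N x j| := abs_sub _ _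
      linarith [hb]
    have hsum : (1:ℝ)/2 ≤ ∑ j : Fin n, |(inner ℝ (v j) (N x) : ℝ)| := by
      have h3 : ∑ j : Fin n, |N x j| ≤
          (∑ j : Fin n, |(inner ℝ (v j) (N x) : ℝ)|) + n * (100 * (n:ℝ))⁻¹ := by
        calc ∑ j : Fin n, |N x j|
            ≤ ∑ j : Fin n, (|(inner ℝ (v j) (N x) : ℝ)| + (100 * (n:ℝ))⁻¹) :=
              Finset.sum_le_sum fun j _ => h2 j
          _ = (∑ j : Fin n, |(inner ℝ (v j) (N x) : ℝ)|) + n * (100 * (n:ℝ))⁻¹ := by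
              rw [Finset.sum_add_distrib]; simp
    
      have hc : (n:ℝ) * (100 * (n:ℝ))⁻¹ = 1/100 := by
        field_simp
      have h4 : (1:ℝ) ≤ ∑ j : Fin n, |N x j| := by rw [← hNunit x]; exact h1
      rw [hc] at h3
      linarith
    calc (1:ℝ≥0∞) = ENNReal.ofReal (2 * (1/2)) := by norm_num
      _ ≤ ENNReal.ofReal (2 * ∑ j : Fin n, |(inner ℝ (v j) (N x) : ℝ)|) := by
          apply ENNReal.ofReal_le_ofReal; linarith
      _ = 2 * ENNReal.ofReal (∑ j : Fin n, |(inner ℝ (v j) (N x) : ℝ)|) := by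
          rw [ENNReal.ofReal_mul (by norm_num)]; norm_num
      _ = 2 * ∑ j : Fin n, ENNReal.ofReal |(inner ℝ (v j) (N x) : ℝ)| := by
          rw [ENNReal.ofReal_sum_of_nonneg (fun j _ => abs_nonneg _)]
  have hmeas : ∀ j : Fin n, Measurable fun x => ENNReal.ofReal |(inner ℝ (v j) (N x) : ℝ)| := by
    intro j
    exact ENNReal.measurable_ofReal.comp ((measurable_const.inner hNmeas).abs)
  calc μ Set.univ = ∫⁻ _, 1 ∂μ := by simp
    _ ≤ ∫⁻ x, 2 * ∑ j : Fin n, ENNReal.ofReal |(inner ℝ (v j) (N x) : ℝ)| ∂μ :=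
        lintegral_mono key
    _ = 2 * ∫⁻ x, ∑ j : Fin n, ENNReal.ofReal |(inner ℝ (v j) (N x) : ℝ)| ∂μ :=
        lintegral_const_mul 2 (Finset.measurable_sum _ fun j _ => hmeas j)
    _ = 2 * ∑ j : Fin n, ∫⁻ x, ENNReal.ofReal |(inner ℝ (v j) (N x) : ℝ)| ∂μ := by
        rw [lintegral_finset_sum _ fun j _ => hmeas j]
end

section
/- (Basic area estimate for polynomial hypersurfaces in a cube) There is a constant c(n) > 0 depending only on n such that the following holds. Let Q ⊆ ℝ^n be a cube of side length 1, and let P be a nonzero real polynomial in n variables that bisects Q, i.e. Vol{x ∈ Q : P(x) > 0} = Vol{x ∈ Q : P(x) < 0}. Then the zero set Z = {x : P(x) = 0} satisfies H^{n-1}(Z ∩ Q) ≥ c(n), where H^{n-1} is (n-1)-dimensional Hausdorff measure. -/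
open MeasureTheory Set
open scoped ENNReal NNReal

lemma my_pi_restrict {ι : Type*} [Fintype ι] (κ : ι → Measure ℝ) [∀ i, SigmaFinite (κ i)]
    (s : ι → Set ℝ) (hs : ∀ i, MeasurableSet (s i)) :
    Measure.pi (fun i => (κ i).restrict (s i)) = (Measure.pi κ).restrict (Set.univ.pi s) := by
  refine Measure.pi_eq (μ := fun i => (κ i).restrict (s i)) fun t ht => ?_
  rw [Measure.restrict_apply (MeasurableSet.univ_pi ht)]
  have : univ.pi t ∩ univ.pi s = univ.pi (fun i => t i ∩ s i) := by
    rw [← Set.pi_inter_distrib]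
  rw [this, Measure.pi_pi]
  exact Finset.prod_congr rfl fun i _ => (Measure.restrict_apply (ht i)).symm

lemma my_map_select {ι ι' : Type*} [Fintype ι] [Fintype ι'] [DecidableEq ι]
    (κ : ι → Measure ℝ) [∀ i, IsProbabilityMeasure (κ i)]
    {σ : ι' → ι} (hσ : Function.Injective σ) :
    Measure.map (fun (x : ι → ℝ) (j : ι') => x (σ j)) (Measure.pi κ)
      = Measure.pi (fun j => κ (σ j)) := by
  refine (Measure.pi_eq (μ := fun j => κ (σ j)) fun t ht => ?_).symm
  have hmeas : Measurable (fun (x : ι → ℝ) (j : ι') => x (σ j)) :=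
    measurable_pi_iff.mpr fun j => measurable_pi_apply _
  rw [Measure.map_apply hmeas (MeasurableSet.univ_pi ht)]
  have hpre : (fun (x : ι → ℝ) (j : ι') => x (σ j)) ⁻¹' (univ.pi t)
      = univ.pi (fun i => ⋂ (j : ι') (_ : σ j = i), t j) := by
    ext x
    simp only [mem_preimage, mem_pi, mem_univ, forall_true_left, Set.mem_iInter]
    constructor
    · rintro h i j rfl; exact h j
    · intro h j; exact h (σ j) j rfl
  rw [hpre, Measure.pi_pi]
  have key : ∀ j : ι', (⋂ (j' : ι') (_ : σ j' = σ j), t j') = t j := by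
    intro j
    apply Set.Subset.antisymm
    · intro x hx
      exact Set.mem_iInter.mp (Set.mem_iInter.mp hx j) rfl
    · intro x hx
      refine Set.mem_iInter.mpr fun j' => Set.mem_iInter.mpr fun h => ?_
      rwa [hσ h]
  have h1 : ∀ i ∈ Finset.univ, i ∉ Finset.univ.image σ →
      (κ i) (⋂ (j : ι') (_ : σ j = i), t j) = 1 := by
    intro i _ hi
    have : (⋂ (j : ι') (_ : σ j = i), t j) = univ := by
      refine Set.eq_univ_of_forall fun x => Set.mem_iInter.mpr fun j => Set.mem_iInter.mpr fun h => ?_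
      exact absurd (Finset.mem_image.mpr ⟨j, Finset.mem_univ j, h⟩) hi
    rw [this]; exact measure_univ
  rw [(Finset.prod_subset (Finset.subset_univ _) h1).symm.trans
    (Finset.prod_image (fun a _ b _ h => hσ h))]
  exact Finset.prod_congr rfl fun j _ => by rw [key j]

lemma my_path {n : ℕ} (a : Fin n → ℝ) (f : (Fin n → ℝ) → ℝ) (hf : Continuous f)
    {x y : Fin n → ℝ} (hx : ∀ i, a i ≤ x i ∧ x i ≤ a i + 1) (hy : ∀ i, a i ≤ y i ∧ y i ≤ a i + 1)
    (hfx : 0 < f x) (hfy : f y < 0) :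
    ∃ (k : Fin n) (z : Fin n → ℝ), (∀ i, a i ≤ z i ∧ z i ≤ a i + 1) ∧ f z = 0 ∧
      (∀ j : Fin n, j < k → z j = y j) ∧ (∀ j : Fin n, k < j → z j = x j) := by
  classical
  set g : ℕ → (Fin n → ℝ) := fun m j => if (j : ℕ) < m then y j else x j with hg
  have hg0 : g 0 = x := by funext j; simp [hg]
  have hgn : g n = y := by funext j; simp [hg, j.isLt]
  have hex : ∃ m, f (g m) ≤ 0 := ⟨n, by rw [hgn]; exact hfy.le⟩
  set m₀ := Nat.find hex with hm₀def
  have hm₀ : f (g m₀) ≤ 0 := Nat.find_spec hex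
  have hm₀pos : 0 < m₀ := by
    rcases Nat.eq_zero_or_pos m₀ with h | h
    · exfalso; rw [h] at hm₀; rw [hg0] at hm₀; exact absurd hm₀ (not_le.mpr hfx)
    · exact h
  have hm₀n : m₀ ≤ n := Nat.find_min' hex (by rw [hgn]; exact hfy.le)
  have hprev : 0 < f (g (m₀ - 1)) := by
    have := Nat.find_min hex (m := m₀ - 1) (by omega)
    exact not_le.mp this
  set k : Fin n := ⟨m₀ - 1, by omega⟩ with hk
  set u : Fin n → ℝ := g (m₀ - 1) with hu
  set s : ℝ → (Fin n → ℝ) := fun t j => if j = k then t else u j with hs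
  have hscont : Continuous s := by
    refine continuous_pi fun j => ?_
    by_cases h : j = k
    · simpa [hs, h] using continuous_id'
    · simpa [hs, h] using continuous_const
  have hsx : s (x k) = u := by
    funext j
    by_cases h : j = k
    · subst h; simp only [hs, if_pos rfl, hu, hg]
      rw [if_neg]; simp [hk]
    · simp [hs, h]
  have hsy : s (y k) = g m₀ := by
    funext j
    by_cases h : j = k
    · subst h; simp only [hs, if_pos rfl, hg]
      rw [if_pos]; simp [hk]; omega
    · have hjk : (j : ℕ) ≠ m₀ - 1 := fun hc => h (Fin.ext (by simp [hk, hc]))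
      simp only [hs, if_neg h, hu, hg]
      by_cases h2 : (j : ℕ) < m₀ - 1
      · rw [if_pos h2, if_pos (by omega)]
      · rw [if_neg h2, if_neg (by omega)]
  have h0mem : (0 : ℝ) ∈ uIcc (f (s (x k))) (f (s (y k))) := by
    rw [hsx, hsy]
    exact Set.mem_uIcc.mpr (Or.inr ⟨hm₀, hprev.le⟩)
  obtain ⟨t, ht, hft⟩ := intermediate_value_uIcc ((hf.comp hscont).continuousOn) h0mem
  have htmem : a k ≤ t ∧ t ≤ a k + 1 := by
    rcases Set.mem_uIcc.mp ht with ⟨h1, h2⟩ | ⟨h1, h2⟩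
    · exact ⟨(hx k).1.trans h1, h2.trans (hy k).2⟩
    · exact ⟨(hy k).1.trans h1, h2.trans (hx k).2⟩
  refine ⟨k, s t, ?_, hft, ?_, ?_⟩
  · intro i
    by_cases h : i = k
    · subst h; simpa [hs] using htmem
    · simp only [hs, if_neg h, hu, hg]
      by_cases h2 : (i : ℕ) < m₀ - 1
      · rw [if_pos h2]; exact hy i
      · rw [if_neg h2]; exact hx i
  · intro j hj
    have hj' : j ≠ k := ne_of_lt hj
    have : (j : ℕ) < m₀ - 1 := hj
    simp [hs, hj', hu, hg, this]
  · intro j hj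
    have hj' : j ≠ k := (ne_of_lt hj).symm
    have : ¬ ((j : ℕ) < m₀ - 1) := by
      have : (m₀ - 1 : ℕ) < (j : ℕ) := hj
      omega
    simp [hs, hj', hu, hg, this]

lemma my_lip {n : ℕ} {ι' : Type*} [Fintype ι'] (σ : ι' → Fin n) :
    LipschitzWith 1 (fun (x : EuclideanSpace ℝ (Fin n)) (j : ι') => x (σ j)) := by
  refine LipschitzWith.of_dist_le_mul fun x y => ?_
  rw [NNReal.coe_one, one_mul]
  refine (dist_pi_le_iff dist_nonneg).mpr fun j => ?_
  rw [EuclideanSpace.dist_eq]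
  have h1 : dist (x (σ j)) (y (σ j)) = Real.sqrt (dist (x (σ j)) (y (σ j)) ^ 2) :=
    (Real.sqrt_sq dist_nonneg).symm
  rw [h1]
  apply Real.sqrt_le_sqrt
  exact Finset.single_le_sum (f := fun i => dist (x i) (y i) ^ 2) (fun i _ => sq_nonneg _) (Finset.mem_univ (σ j))

/-- **Basic area estimate.** There is `c(n) > 0` such that if a nonzero polynomial `P` bisects a
unit cube `Q ⊆ ℝ^n`, then the zero set of `P` has `(n-1)`-dimensional Hausdorff measure at least
`c(n)` inside `Q`. -/
theorem basic_area_estimate (n : ℕ) (hn : 1 ≤ n) :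
    ∃ c : ℝ, 0 < c ∧
      ∀ (a : EuclideanSpace ℝ (Fin n)) (P : MvPolynomial (Fin n) ℝ), P ≠ 0 →
        (volume {x ∈ {x : EuclideanSpace ℝ (Fin n) | ∀ i, a i ≤ x i ∧ x i ≤ a i + 1} |
              0 < MvPolynomial.eval (fun j => x j) P}
          = volume {x ∈ {x : EuclideanSpace ℝ (Fin n) | ∀ i, a i ≤ x i ∧ x i ≤ a i + 1} |
              MvPolynomial.eval (fun j => x j) P < 0}) →
        ENNReal.ofReal c ≤
          μH[(n:ℝ) - 1] ({x : EuclideanSpace ℝ (Fin n) | MvPolynomial.eval (fun j => x j) P = 0}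
            ∩ {x | ∀ i, a i ≤ x i ∧ x i ≤ a i + 1}) := by
  classical
  refine ⟨1 / (4 * n), by positivity, fun a P _ hbal => ?_⟩
  set f : (Fin n → ℝ) → ℝ := fun z => MvPolynomial.eval z P with hfdef
  have hfc : Continuous f := MvPolynomial.continuous_eval P
  set cube : Set (Fin n → ℝ) := Set.univ.pi (fun i => Icc (a i) (a i + 1)) with hcube
  set Zc : Set (EuclideanSpace ℝ (Fin n)) :=
    {x : EuclideanSpace ℝ (Fin n) | MvPolynomial.eval (fun j => x j) P = 0}
      ∩ {x | ∀ i, a i ≤ x i ∧ x i ≤ a i + 1} with hZc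
  set H := μH[(n:ℝ) - 1] Zc with hH
  show ENNReal.ofReal (1 / (4 * n)) ≤ H
  -- the measurable equivalence with the pi type
  set E := (MeasurableEquiv.toLp 2 (Fin n → ℝ)).symm with hE
  have hvol : ∀ (S : Set (Fin n → ℝ)), MeasurableSet S → volume (E ⁻¹' S) = volume S :=
    fun S hS => (EuclideanSpace.volume_preserving_symm_measurableEquiv_toLp (Fin n)).measure_preimage
      hS.nullMeasurableSet
  have hEapp : ∀ (x : EuclideanSpace ℝ (Fin n)) (i : Fin n), E x i = x i := fun _ _ => rfl
  -- basic measurability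
  have hApos_meas : MeasurableSet {z : Fin n → ℝ | 0 < f z} :=
    (isOpen_lt continuous_const hfc).measurableSet
  have hAneg_meas : MeasurableSet {z : Fin n → ℝ | f z < 0} :=
    (isOpen_lt hfc continuous_const).measurableSet
  have hAzero_meas : MeasurableSet {z : Fin n → ℝ | f z = 0} :=
    (isClosed_eq hfc continuous_const).measurableSet
  have hcube_meas : MeasurableSet cube :=
    MeasurableSet.univ_pi fun i => measurableSet_Icc
  have hcube_mem : ∀ z : Fin n → ℝ, z ∈ cube ↔ ∀ i, a i ≤ z i ∧ z i ≤ a i + 1 := by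
    intro z
    rw [hcube, Set.mem_univ_pi]
    exact forall_congr' fun i => Set.mem_Icc
  -- the coordinate measures
  set κ : Fin n → Measure ℝ := fun i => volume.restrict (Icc (a i) (a i + 1)) with hκ
  haveI hκprob : ∀ i, IsProbabilityMeasure (κ i) := by
    intro i
    constructor
    rw [hκ]
    simp [Real.volume_Icc]
  have hpiκ : Measure.pi κ = (volume : Measure (Fin n → ℝ)).restrict cube := by
    rw [hκ, hcube, my_pi_restrict (fun _ => volume) _ (fun i => measurableSet_Icc), ← volume_pi]
  have hκapply : ∀ (S : Set (Fin n → ℝ)), MeasurableSet S →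
      Measure.pi κ S = volume (S ∩ cube) := by
    intro S hS
    rw [hpiκ, Measure.restrict_apply hS]
  -- transfers between euclidean sets and pi sets
  have hA : volume {x ∈ {x : EuclideanSpace ℝ (Fin n) | ∀ i, a i ≤ x i ∧ x i ≤ a i + 1} |
      0 < MvPolynomial.eval (fun j => x j) P} = Measure.pi κ {z | 0 < f z} := by
    rw [hκapply _ hApos_meas, ← hvol _ (hApos_meas.inter hcube_meas)]
    congr 1
    ext x
    simp only [Set.mem_preimage, Set.mem_inter_iff, Set.mem_setOf_eq, Set.sep_setOf]
    rw [hcube_mem (E x)]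
    constructor
    · rintro ⟨h1, h2⟩; exact ⟨h2, fun i => h1 i⟩
    · rintro ⟨h2, h1⟩; exact ⟨fun i => h1 i, h2⟩
  have hB : volume {x ∈ {x : EuclideanSpace ℝ (Fin n) | ∀ i, a i ≤ x i ∧ x i ≤ a i + 1} |
      MvPolynomial.eval (fun j => x j) P < 0} = Measure.pi κ {z | f z < 0} := by
    rw [hκapply _ hAneg_meas, ← hvol _ (hAneg_meas.inter hcube_meas)]
    congr 1
    ext x
    simp only [Set.mem_preimage, Set.mem_inter_iff, Set.mem_setOf_eq, Set.sep_setOf]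
    rw [hcube_mem (E x)]
    constructor
    · rintro ⟨h1, h2⟩; exact ⟨h2, fun i => h1 i⟩
    · rintro ⟨h2, h1⟩; exact ⟨fun i => h1 i, h2⟩
  have hZ : volume Zc = Measure.pi κ {z | f z = 0} := by
    rw [hκapply _ hAzero_meas, ← hvol _ (hAzero_meas.inter hcube_meas)]
    congr 1
    ext x
    simp only [Set.mem_preimage, Set.mem_inter_iff, Set.mem_setOf_eq, hZc]
    rw [hcube_mem (E x)]
    tauto
  have hpiuniv : Measure.pi κ Set.univ = 1 := by
    rw [Measure.pi_univ]; simp [measure_univ]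
  -- Case 1: the zero set has positive volume, then H = ⊤
  by_cases hz0 : volume Zc = 0
  swap
  · have hlipid := my_lip (n := n) (σ := fun i : Fin n => i)
    have h1 : μH[(n:ℝ)] ((fun (x : EuclideanSpace ℝ (Fin n)) (j : Fin n) => x j) '' Zc)
        ≤ ((1:ℝ≥0) : ℝ≥0∞) ^ ((n:ℝ)) * μH[(n:ℝ)] Zc :=
      hlipid.hausdorffMeasure_image_le (by positivity) Zc
    have himg : (fun (x : EuclideanSpace ℝ (Fin n)) (j : Fin n) => x j) '' Zc
        = ({z : Fin n → ℝ | f z = 0} ∩ cube) := by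
      ext z
      constructor
      · rintro ⟨x, ⟨hx1, hx2⟩, rfl⟩
        exact ⟨hx1, (hcube_mem _).mpr hx2⟩
      · rintro ⟨h1', h2'⟩
        exact ⟨WithLp.toLp 2 z, ⟨h1', (hcube_mem z).mp h2'⟩, rfl⟩
    have hpiH : (μH[(n:ℝ)] : Measure (Fin n → ℝ)) = volume := by
      have h := MeasureTheory.hausdorffMeasure_pi_real (ι := Fin n)
      rw [Fintype.card_fin] at h
      exact h
    have hchain : volume Zc ≤ μH[(n:ℝ)] Zc := by
      calc volume Zc = volume ({z : Fin n → ℝ | f z = 0} ∩ cube) := by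
            rw [hZ, hκapply _ hAzero_meas]
        _ = μH[(n:ℝ)] ({z : Fin n → ℝ | f z = 0} ∩ cube) := by rw [hpiH]
        _ = μH[(n:ℝ)] ((fun (x : EuclideanSpace ℝ (Fin n)) (j : Fin n) => x j) '' Zc) := by
            rw [himg]
        _ ≤ ((1:ℝ≥0) : ℝ≥0∞) ^ ((n:ℝ)) * μH[(n:ℝ)] Zc := h1
        _ = μH[(n:ℝ)] Zc := by simp
    rcases MeasureTheory.Measure.hausdorffMeasure_zero_or_top (show (n:ℝ) - 1 < (n:ℝ) by linarith) Zc with h | h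
    · rw [h] at hchain
      exact absurd (le_zero_iff.mp hchain) hz0
    · rw [hH, h]
      exact le_top
  -- Case 2: the zero set is null
  have hzero : Measure.pi κ {z : Fin n → ℝ | f z = 0} = 0 := by rw [← hZ]; exact hz0
  set v := Measure.pi κ {z : Fin n → ℝ | 0 < f z} with hv
  have hvB : Measure.pi κ {z : Fin n → ℝ | f z < 0} = v := by
    rw [← hB, ← hbal, hA]
  have huniv : {z : Fin n → ℝ | 0 < f z} ∪ ({z | f z < 0} ∪ {z | f z = 0}) = Set.univ := by
    ext z
    simp only [Set.mem_union, Set.mem_setOf_eq, Set.mem_univ, iff_true]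
    rcases lt_trichotomy (f z) 0 with h | h | h
    exacts [Or.inr (Or.inl h), Or.inr (Or.inr h), Or.inl h]
  have hone : (1:ℝ≥0∞) ≤ v + v := by
    calc (1:ℝ≥0∞) = Measure.pi κ Set.univ := hpiuniv.symm
      _ = Measure.pi κ ({z : Fin n → ℝ | 0 < f z} ∪ ({z | f z < 0} ∪ {z | f z = 0})) := by
          rw [huniv]
      _ ≤ Measure.pi κ {z : Fin n → ℝ | 0 < f z}
          + (Measure.pi κ {z : Fin n → ℝ | f z < 0} + Measure.pi κ {z : Fin n → ℝ | f z = 0}) :=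
          le_trans (measure_union_le _ _) (add_le_add le_rfl (measure_union_le _ _))
      _ = v + v := by rw [hzero, add_zero, hvB]
  have hhalf : (2⁻¹ : ℝ≥0∞) ≤ v := by
    by_contra hc
    push_neg at hc
    have h2 := ENNReal.add_lt_add hc hc
    rw [ENNReal.inv_two_add_inv_two] at h2
    exact absurd hone (not_le.mpr h2)
  set μ2 := (Measure.pi κ).prod (Measure.pi κ) with hμ2
  have hU : (2⁻¹ : ℝ≥0∞) * 2⁻¹ ≤ μ2 ({z : Fin n → ℝ | 0 < f z} ×ˢ {z : Fin n → ℝ | f z < 0}) := by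
    rw [hμ2, Measure.prod_prod]
    exact mul_le_mul' hhalf (le_of_le_of_eq hhalf hvB.symm)
  set D : (k : Fin n) → Set ({j : Fin n // j ≠ k} → ℝ) :=
    fun k => (fun (x : EuclideanSpace ℝ (Fin n)) (j : {j : Fin n // j ≠ k}) => x (j : Fin n)) '' Zc
    with hDdef
  set ek : (k : Fin n) → (Fin n → ℝ) × (Fin n → ℝ) → ({j : Fin n // j ≠ k} → ℝ) :=
    fun k w j => if (j : Fin n) < k then w.2 (j : Fin n) else w.1 (j : Fin n) with hek
  have hDpi : ∀ k : Fin n, D k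
      = (fun (z : Fin n → ℝ) (j : {j : Fin n // j ≠ k}) => z (j : Fin n))
        '' ({z : Fin n → ℝ | f z = 0} ∩ cube) := by
    intro k
    ext w
    constructor
    · rintro ⟨x, ⟨hx1, hx2⟩, rfl⟩
      exact ⟨x, ⟨hx1, (hcube_mem _).mpr hx2⟩, rfl⟩
    · rintro ⟨z, ⟨hz1, hz2⟩, rfl⟩
      exact ⟨WithLp.toLp 2 z, ⟨hz1, (hcube_mem z).mp hz2⟩, rfl⟩
  have hDmeas : ∀ k : Fin n, MeasurableSet (D k) := by
    intro k
    rw [hDpi k]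
    have hcomp : IsCompact ({z : Fin n → ℝ | f z = 0} ∩ cube) :=
      (isCompact_univ_pi fun i => isCompact_Icc).inter_left (isClosed_eq hfc continuous_const)
    exact (hcomp.image (continuous_pi fun j => continuous_apply _)).measurableSet
  have hcover : ({z : Fin n → ℝ | 0 < f z} ×ˢ {z : Fin n → ℝ | f z < 0})
      ⊆ (⋃ k, ek k ⁻¹' D k) ∪ (cube ×ˢ cube)ᶜ := by
    rintro ⟨x, y⟩ ⟨hx, hy⟩
    by_cases hxy : x ∈ cube ∧ y ∈ cube
    · left
      obtain ⟨k, z, hzbox, hz0', hzy, hzx⟩ :=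
        my_path a f hfc ((hcube_mem x).mp hxy.1) ((hcube_mem y).mp hxy.2) hx hy
      refine Set.mem_iUnion.mpr ⟨k, ?_⟩
      show ek k (x, y) ∈ D k
      rw [hDpi k]
      refine ⟨z, ⟨hz0', (hcube_mem z).mpr hzbox⟩, ?_⟩
      funext j
      by_cases hj : (j : Fin n) < k
      · simp only [hek]
        rw [if_pos hj]
        exact hzy _ hj
      · have hkj : k < (j : Fin n) := (lt_or_gt_of_ne j.prop).resolve_left hj
        simp only [hek]
        rw [if_neg hj]
        exact hzx _ hkj
    · right
      intro hc
      exact hxy ⟨hc.1, hc.2⟩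
  have hcompl : μ2 ((cube ×ˢ cube)ᶜ) = 0 := by
    have hcube1 : Measure.pi κ cube = 1 := by
      rw [hcube, Measure.pi_pi]
      simp [hκ, Real.volume_Icc]
    have hfull : μ2 (cube ×ˢ cube) = 1 := by
      rw [hμ2, Measure.prod_prod, hcube1, one_mul]
    have huniv2 : μ2 Set.univ = 1 := by
      rw [hμ2, ← Set.univ_prod_univ, Measure.prod_prod, hpiuniv, one_mul]
    rw [measure_compl (hcube_meas.prod hcube_meas) (by rw [hfull]; exact ENNReal.one_ne_top),
      huniv2, hfull, tsub_self]
  have hkey : ∀ k : Fin n, μ2 (ek k ⁻¹' D k) ≤ H := by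
    intro k
    set ν : Fin n ⊕ Fin n → Measure ℝ := Sum.elim κ κ with hν
    haveI hνprob : ∀ i, IsProbabilityMeasure (ν i) := by
      intro i
      cases i with
      | inl i => exact hκprob i
      | inr i => exact hκprob i
    set σ : {j : Fin n // j ≠ k} → Fin n ⊕ Fin n :=
      fun j => if (j : Fin n) < k then Sum.inr (j : Fin n) else Sum.inl (j : Fin n) with hσ
    have hσinj : Function.Injective σ := by
      intro j1 j2 h
      have h' : (if (j1 : Fin n) < k then (Sum.inr (j1 : Fin n) : Fin n ⊕ Fin n)
            else Sum.inl (j1 : Fin n))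
          = (if (j2 : Fin n) < k then (Sum.inr (j2 : Fin n) : Fin n ⊕ Fin n)
            else Sum.inl (j2 : Fin n)) := h
      by_cases h1 : (j1 : Fin n) < k <;> by_cases h2 : (j2 : Fin n) < k
      · rw [if_pos h1, if_pos h2] at h'
        exact Subtype.ext (Sum.inr.inj h')
      · rw [if_pos h1, if_neg h2] at h'
        exact absurd h' (by simp)
      · rw [if_neg h1, if_pos h2] at h'
        exact absurd h' (by simp)
      · rw [if_neg h1, if_neg h2] at h'
        exact Subtype.ext (Sum.inl.inj h')
    have hE2 := measurePreserving_sumPiEquivProdPi ν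
    have hμ2eq : μ2 = Measure.map
        (MeasurableEquiv.sumPiEquivProdPi (fun _ : Fin n ⊕ Fin n => ℝ)) (Measure.pi ν) := by
      rw [hE2.map_eq]
      rfl
    have hcomp : (ek k) ∘ (MeasurableEquiv.sumPiEquivProdPi (fun _ : Fin n ⊕ Fin n => ℝ))
        = fun (z : Fin n ⊕ Fin n → ℝ) (j : {j : Fin n // j ≠ k}) => z (σ j) := by
      funext z j
      by_cases hj : (j : Fin n) < k <;>
        simp [hek, hσ, hj, MeasurableEquiv.sumPiEquivProdPi, Equiv.sumPiEquivProdPi]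
    have hsel := my_map_select ν hσinj
    have hνσ : (fun j : {j : Fin n // j ≠ k} => ν (σ j))
        = fun j : {j : Fin n // j ≠ k} => κ (j : Fin n) := by
      funext j
      by_cases hj : (j : Fin n) < k <;> simp [hσ, hν, hj]
    have hmeas_ek : Measurable (ek k) := by
      refine measurable_pi_iff.mpr fun j => ?_
      by_cases hj : (j : Fin n) < k
      · simp only [hek]
        rw [show (fun w : (Fin n → ℝ) × (Fin n → ℝ) =>
            if (j : Fin n) < k then w.2 (j : Fin n) else w.1 (j : Fin n))
          = fun w => w.2 (j : Fin n) by funext w; rw [if_pos hj]]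
        exact (measurable_pi_apply _).comp measurable_snd
      · simp only [hek]
        rw [show (fun w : (Fin n → ℝ) × (Fin n → ℝ) =>
            if (j : Fin n) < k then w.2 (j : Fin n) else w.1 (j : Fin n))
          = fun w => w.1 (j : Fin n) by funext w; rw [if_neg hj]]
        exact (measurable_pi_apply _).comp measurable_fst
    have hmapek : Measure.map (ek k) μ2
        = Measure.pi (fun j : {j : Fin n // j ≠ k} => κ (j : Fin n)) := by
      rw [hμ2eq, Measure.map_map hmeas_ek (MeasurableEquiv.measurable _), hcomp, hsel, hνσ]
    have step1 : μ2 (ek k ⁻¹' D k)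
        = Measure.pi (fun j : {j : Fin n // j ≠ k} => κ (j : Fin n)) (D k) := by
      rw [← hmapek, Measure.map_apply hmeas_ek (hDmeas k)]
    have step2 : Measure.pi (fun j : {j : Fin n // j ≠ k} => κ (j : Fin n)) (D k)
        ≤ volume (D k) := by
      rw [show (fun j : {j : Fin n // j ≠ k} => κ (j : Fin n))
          = fun j : {j : Fin n // j ≠ k} =>
            (volume : Measure ℝ).restrict (Icc (a (j : Fin n)) (a (j : Fin n) + 1)) from rfl,
        my_pi_restrict (fun _ => volume) _ (fun i => measurableSet_Icc), ← volume_pi,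
        Measure.restrict_apply (hDmeas k)]
      exact measure_mono Set.inter_subset_left
    have hcard : ((Fintype.card {j : Fin n // j ≠ k} : ℕ) : ℝ) = (n : ℝ) - 1 := by
      have hc : Fintype.card {j : Fin n // j ≠ k} = n - 1 := by
        simp [Fintype.card_subtype_compl, Fintype.card_subtype_eq, Fintype.card_fin]
      rw [hc, Nat.cast_sub hn, Nat.cast_one]
    have step3 : volume (D k) = μH[(n:ℝ) - 1] (D k) := by
      calc volume (D k)
          = μH[((Fintype.card {j : Fin n // j ≠ k} : ℕ) : ℝ)] (D k) := by
            rw [MeasureTheory.hausdorffMeasure_pi_real]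
        _ = μH[(n:ℝ) - 1] (D k) := by rw [hcard]
    have step4 : μH[(n:ℝ) - 1] (D k) ≤ H := by
      have hlip := my_lip (σ := fun j : {j : Fin n // j ≠ k} => (j : Fin n))
      have h1n : (0:ℝ) ≤ (n:ℝ) - 1 := by
        have : (1:ℝ) ≤ n := by exact_mod_cast hn
        linarith
      have himg := hlip.hausdorffMeasure_image_le h1n Zc
      calc μH[(n:ℝ) - 1] (D k)
          ≤ ((1:ℝ≥0) : ℝ≥0∞) ^ ((n:ℝ) - 1) * μH[(n:ℝ) - 1] Zc := himg
        _ = H := by simp [hH]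
    calc μ2 (ek k ⁻¹' D k)
        = Measure.pi (fun j : {j : Fin n // j ≠ k} => κ (j : Fin n)) (D k) := step1
      _ ≤ volume (D k) := step2
      _ = μH[(n:ℝ) - 1] (D k) := step3
      _ ≤ H := step4
  have hsum : (2⁻¹ : ℝ≥0∞) * 2⁻¹ ≤ (n : ℝ≥0∞) * H := by
    calc (2⁻¹ : ℝ≥0∞) * 2⁻¹
        ≤ μ2 ({z : Fin n → ℝ | 0 < f z} ×ˢ {z : Fin n → ℝ | f z < 0}) := hU
      _ ≤ μ2 ((⋃ k, ek k ⁻¹' D k) ∪ (cube ×ˢ cube)ᶜ) := measure_mono hcover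
      _ ≤ μ2 (⋃ k, ek k ⁻¹' D k) + μ2 ((cube ×ˢ cube)ᶜ) := measure_union_le _ _
      _ = μ2 (⋃ k, ek k ⁻¹' D k) := by rw [hcompl, add_zero]
      _ ≤ ∑' k, μ2 (ek k ⁻¹' D k) := measure_iUnion_le _
      _ = ∑ k : Fin n, μ2 (ek k ⁻¹' D k) := tsum_fintype _
      _ ≤ ∑ _k : Fin n, H := Finset.sum_le_sum fun k _ => hkey k
      _ = (n : ℝ≥0∞) * H := by
          rw [Finset.sum_const, Finset.card_univ, Fintype.card_fin, nsmul_eq_mul]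
  rcases eq_top_or_lt_top H with ht | _
  · rw [ht]; exact le_top
  have hn0 : (n : ℝ≥0∞) ≠ 0 := by
    simp only [ne_eq, Nat.cast_eq_zero]
    omega
  have hHge : (2⁻¹ * 2⁻¹ : ℝ≥0∞) / (n : ℝ≥0∞) ≤ H := by
    rw [ENNReal.div_le_iff_le_mul (Or.inl hn0) (Or.inl (ENNReal.natCast_ne_top n))]
    exact hsum.trans_eq (mul_comm _ _)
  refine le_trans (le_of_eq ?_) hHge
  have h4 : ((4 * n : ℕ) : ℝ≥0∞)⁻¹ = (2⁻¹ * 2⁻¹ : ℝ≥0∞) / (n : ℝ≥0∞) := by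
    rw [div_eq_mul_inv]
    rw [show ((4 * n : ℕ) : ℝ≥0∞) = 4 * (n : ℝ≥0∞) by push_cast; ring]
    rw [ENNReal.mul_inv (Or.inl (by norm_num)) (Or.inl (by norm_num))]
    congr 1
    rw [show (4 : ℝ≥0∞) = 2 * 2 by norm_num]
    rw [ENNReal.mul_inv (Or.inl (by norm_num)) (Or.inl (by norm_num))]
  rw [← h4]
  rw [one_div, ENNReal.ofReal_inv_of_pos (by positivity)]
  congr 1
  rw [show ((4:ℝ) * n) = ((4 * n : ℕ) : ℝ) by push_cast; ring, ENNReal.ofReal_natCast]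
end

section
/- There is a constant c(n) > 0 depending only on n such that the following holds. Let W : ℝ^n → ℝ be a convex function satisfying W(λ v) = |λ| W(v) for all λ ∈ ℝ and v ∈ ℝ^n, and W(v) ≥ ‖v‖ for all v ∈ ℝ^n. Let v_1, …, v_n ∈ ℝ^n be unit vectors with |det(v_1, …, v_n)| ≥ θ for some θ > 0. Then the set K = {v ∈ ℝ^n : ‖v‖ ≤ 1 and W(v) ≤ 1} has Lebesgue measure Vol(K) ≥ c(n) θ / ∏_{j=1}^n W(v_j). -/
open MeasureTheory
open scoped ENNReal

/-- There is `c(n) > 0` such that: if `W : ℝ^n → ℝ` is convex, absolutely homogeneous of degree 1,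
and `W(v) ≥ ‖v‖` for all `v`, and `v_1, …, v_n` are unit vectors with `|det(v_1, …, v_n)| ≥ θ`
for some `θ > 0`, then `K = {v : ‖v‖ ≤ 1, W(v) ≤ 1}` has volume at least
`c(n) θ / ∏_j W(v_j)`. -/
theorem convex_body_volume_lower_bound (n : ℕ) (hn : 1 ≤ n) :
    ∃ c : ℝ, 0 < c ∧
      ∀ (W : EuclideanSpace ℝ (Fin n) → ℝ),
        ConvexOn ℝ Set.univ W →
        (∀ (lam : ℝ) (v : EuclideanSpace ℝ (Fin n)), W (lam • v) = |lam| * W v) →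
        (∀ v : EuclideanSpace ℝ (Fin n), ‖v‖ ≤ W v) →
      ∀ (v : Fin n → EuclideanSpace ℝ (Fin n)), (∀ j, ‖v j‖ = 1) →
      ∀ θ : ℝ, 0 < θ →
        θ ≤ |Matrix.det (Matrix.of fun i j : Fin n => v j i)| →
        ENNReal.ofReal (c * θ / ∏ j : Fin n, W (v j)) ≤
          volume {u : EuclideanSpace ℝ (Fin n) | ‖u‖ ≤ 1 ∧ W u ≤ 1} := by
  have hn0 : (0:ℝ) < n := by exact_mod_cast hn
  refine ⟨(2 / n) ^ n, pow_pos (by positivity) n, ?_⟩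
  intro W hconv hhom hnorm v hunit θ hθ hdet
  -- basic facts about W
  have hW0 : W 0 = 0 := by
    have := hhom 0 0
    simpa using this
  have hWnonneg : ∀ u, 0 ≤ W u := fun u => le_trans (norm_nonneg u) (hnorm u)
  have hWadd : ∀ a b, W (a + b) ≤ W a + W b := by
    intro a b
    have h2 : W ((1/2 : ℝ) • a + (1/2 : ℝ) • b) ≤ (1/2) * W a + (1/2) * W b :=
      hconv.2 (Set.mem_univ a) (Set.mem_univ b) (by norm_num) (by norm_num) (by norm_num)
    have hab : a + b = (2:ℝ) • ((1/2 : ℝ) • a + (1/2 : ℝ) • b) := by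
      rw [smul_add, smul_smul, smul_smul]; norm_num
    calc W (a + b) = |(2:ℝ)| * W ((1/2 : ℝ) • a + (1/2 : ℝ) • b) := by rw [hab, hhom]
    _ ≤ 2 * ((1/2) * W a + (1/2) * W b) := by
        rw [abs_two]
        exact mul_le_mul_of_nonneg_left h2 (by norm_num)
    _ = W a + W b := by ring
  have hWsum : ∀ (s : Finset (Fin n)) (f : Fin n → EuclideanSpace ℝ (Fin n)),
      W (∑ j ∈ s, f j) ≤ ∑ j ∈ s, W (f j) := by
    intro s f
    induction s using Finset.cons_induction with
    | empty => simp [hW0]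
    | cons j s hj ih =>
      rw [Finset.sum_cons, Finset.sum_cons]
      exact le_trans (hWadd _ _) (by linarith)
  have hWpos : ∀ j, (0:ℝ) < W (v j) := fun j => lt_of_lt_of_le (by rw [hunit j]; norm_num)
    (hnorm (v j))
  set a : Fin n → ℝ := fun j => (W (v j))⁻¹ with ha
  have hapos : ∀ j, 0 < a j := fun j => inv_pos.2 (hWpos j)
  -- the linear map
  set M : Matrix (Fin n) (Fin n) ℝ := Matrix.of fun i j => a j * v j i with hM
  set T : EuclideanSpace ℝ (Fin n) →ₗ[ℝ] EuclideanSpace ℝ (Fin n) := Matrix.toEuclideanLin M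
    with hT
  have hTapply : ∀ x : EuclideanSpace ℝ (Fin n), T x = ∑ j : Fin n, (a j * x j) • v j := by
    intro x
    have : ∀ i, T x i = ∑ j : Fin n, (a j * x j) * v j i := by
      intro i
      simp only [hT, Matrix.toEuclideanLin_apply]
      simp [Matrix.mulVec, dotProduct, hM]
      ring_nf
      exact Finset.sum_congr rfl fun j _ => by ring
    ext i
    rw [this i, WithLp.ofLp_sum, Finset.sum_apply]
    exact Finset.sum_congr rfl fun j _ => by simp [PiLp.smul_apply, smul_eq_mul]
  -- determinant
  have hdetT : LinearMap.det T = (∏ j : Fin n, a j) * Matrix.det (Matrix.of fun i j : Fin n => v j i) := by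
    have h1 : LinearMap.det T = M.det := by
      rw [hT, Matrix.toEuclideanLin_eq_toLin, LinearMap.det_toLin]
    have h2 : M = (Matrix.of fun i j : Fin n => v j i) * Matrix.diagonal a := by
      ext i j
      simp [hM, Matrix.mul_diagonal, mul_comm]
    rw [h1, h2, Matrix.det_mul, Matrix.det_diagonal, mul_comm]
  -- the cube
  set S : Set (EuclideanSpace ℝ (Fin n)) :=
    (MeasurableEquiv.toLp 2 (Fin n → ℝ)).symm ⁻¹' (Set.univ.pi fun _ => Set.Icc (-(1/n)) (1/n))
    with hS
  have hScube : volume S = ENNReal.ofReal ((2 / n) ^ n) := by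
    rw [hS, (EuclideanSpace.volume_preserving_symm_measurableEquiv_toLp (Fin n)).measure_preimage
      (MeasurableSet.univ_pi fun _ => measurableSet_Icc).nullMeasurableSet]
    rw [volume_pi_pi]
    have h1 : (1/(n:ℝ) - -(1/n)) = 2/n := by ring
    simp only [Real.volume_Icc, h1]
    rw [Finset.prod_const, Finset.card_univ, Fintype.card_fin,
      ← ENNReal.ofReal_pow (by positivity)]
  -- image is in K
  have hsub : T '' S ⊆ {u : EuclideanSpace ℝ (Fin n) | ‖u‖ ≤ 1 ∧ W u ≤ 1} := by
    rintro _ ⟨x, hx, rfl⟩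
    have hxj : ∀ j, |x j| ≤ 1 / n := by
      intro j
      have := hx j (Set.mem_univ j)
      exact abs_le.2 ⟨this.1, this.2⟩
    have hWTx : W (T x) ≤ 1 := by
      rw [hTapply]
      refine le_trans (hWsum Finset.univ _) ?_
      have : ∀ j, W ((a j * x j) • v j) = |x j| * (a j * W (v j)) := by
        intro j
        rw [hhom, abs_mul, abs_of_pos (hapos j)]
        ring
      calc ∑ j : Fin n, W ((a j * x j) • v j) = ∑ j : Fin n, |x j| * (a j * W (v j)) := by
            exact Finset.sum_congr rfl fun j _ => this j
      _ = ∑ j : Fin n, |x j| := by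
            refine Finset.sum_congr rfl fun j _ => ?_
            rw [ha, inv_mul_cancel₀ (hWpos j).ne', mul_one]
      _ ≤ ∑ _j : Fin n, (1 / n : ℝ) := Finset.sum_le_sum fun j _ => hxj j
      _ = 1 := by
            rw [Finset.sum_const, Finset.card_univ, Fintype.card_fin, nsmul_eq_mul]
            field_simp
    exact ⟨le_trans (hnorm _) hWTx, hWTx⟩
  -- put it together
  have himg : volume (T '' S) = ENNReal.ofReal |LinearMap.det T| * volume S :=
    Measure.addHaar_image_linearMap volume T S
  refine le_trans ?_ (measure_mono hsub)
  rw [himg, hScube, hdetT]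
  rw [← ENNReal.ofReal_mul (abs_nonneg _)]
  apply ENNReal.ofReal_le_ofReal
  have hprodW : (0:ℝ) < ∏ j : Fin n, W (v j) := Finset.prod_pos fun j _ => hWpos j
  have hproda : ∏ j : Fin n, a j = (∏ j : Fin n, W (v j))⁻¹ := by
    rw [ha, ← Finset.prod_inv_distrib]
  rw [abs_mul, abs_of_pos (Finset.prod_pos fun j _ => hapos j), hproda]
  rw [div_eq_mul_inv]
  calc (2 / n : ℝ) ^ n * θ * (∏ j : Fin n, W (v j))⁻¹
      ≤ (2 / n) ^ n * |Matrix.det (Matrix.of fun i j : Fin n => v j i)| * (∏ j : Fin n, W (v j))⁻¹ := by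
        apply mul_le_mul_of_nonneg_right _ (by positivity)
        exact mul_le_mul_of_nonneg_left hdet (by positivity)
    _ = (∏ j : Fin n, W (v j))⁻¹ * |Matrix.det (Matrix.of fun i j : Fin n => v j i)| * (2 / n) ^ n := by
        ring
end
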